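/- Continuous Grönwall inequality with weakly singular kernel: if φ : (0,T] → [0,∞) is continuous and satisfies φ(t) ≤ A t^{β} + B ∫₀ᵗ (t−s)^{α−1} φ(s) ds for all t ∈ (0,T], with α ∈ (0,1), β > −1, A, B ≥ 0, and ∫₀ᵗ (t−s)^{α−1} s^{β} ds finite, then φ(t) ≤ C A t^{β} on (0,T] with C depending only on α, β, B, T. -/

import Mathlib

open MeasureTheory Set Real

-- helper A
lemma rpowIntOn {r c : ℝ} (hr : -1 < r) : IntegrableOn (fun s : ℝ => s ^ r) (Ioo 0 c) := by
  rcases le_or_gt c 0 with h | h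
  · rw [Set.Ioo_eq_empty (by linarith)]; simp [integrableOn_empty]
  · have := (intervalIntegral.intervalIntegrable_rpow' hr (a := 0) (b := c))
    rw [intervalIntegrable_iff_integrableOn_Ioo_of_le h.le] at this
    exact this

lemma rpowIntVal {r c : ℝ} (hr : -1 < r) (hc : 0 ≤ c) :
    ∫ s in Ioo 0 c, s ^ r = c ^ (r + 1) / (r + 1) := by
  rw [← MeasureTheory.integral_Ioc_eq_integral_Ioo, ← intervalIntegral.integral_of_le hc,
    integral_rpow (Or.inl hr), Real.zero_rpow (by linarith), sub_zero]

lemma expKernIntOn {r lam c : ℝ} (hr : -1 < r) (hlam : 0 ≤ lam) :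
    IntegrableOn (fun u : ℝ => u ^ r * Real.exp (-lam * u)) (Ioo 0 c) := by
  refine Integrable.mono' (rpowIntOn hr) (Measurable.aestronglyMeasurable (by fun_prop)) ?_
  rw [ae_restrict_iff' measurableSet_Ioo]
  refine ae_of_all _ fun u hu => ?_
  obtain ⟨h0, _⟩ := hu
  rw [Real.norm_eq_abs, abs_of_nonneg (by positivity)]
  exact mul_le_of_le_one_right (rpow_nonneg h0.le r)
    (Real.exp_le_one_iff.2 (by nlinarith))

lemma compKernIntOn {r lam t : ℝ} (hr : -1 < r) (hlam : 0 ≤ lam) (ht : 0 < t) :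
    IntegrableOn (fun s => (t - s) ^ r * Real.exp (-lam * (t - s))) (Ico (t/2) t) := by
  have h1 : IntervalIntegrable (fun u : ℝ => u ^ r * Real.exp (-lam * u)) volume 0 (t/2) := by
    rw [intervalIntegrable_iff_integrableOn_Ioo_of_le (by linarith)]
    exact expKernIntOn hr hlam
  have h2 := (h1.comp_sub_left t).symm
  rw [sub_zero, show t - t/2 = t/2 by ring] at h2
  rw [intervalIntegrable_iff_integrableOn_Ioo_of_le (by linarith)] at h2
  rwa [integrableOn_Ico_iff_integrableOn_Ioo]

lemma compKernVal {r lam t : ℝ} (ht : 0 < t) :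
    ∫ s in Ico (t/2) t, (t - s) ^ r * Real.exp (-lam * (t - s))
      = ∫ u in Ioc 0 (t/2), u ^ r * Real.exp (-lam * u) := by
  rw [MeasureTheory.integral_Ico_eq_integral_Ioo, ← MeasureTheory.integral_Ioc_eq_integral_Ioo,
    ← intervalIntegral.integral_of_le (by linarith : t/2 ≤ t),
    ← intervalIntegral.integral_of_le (by linarith : (0:ℝ) ≤ t/2)]
  have := intervalIntegral.integral_comp_sub_left (a := t/2) (b := t)
    (fun u => u ^ r * Real.exp (-lam * u)) t
  rw [show t - t = 0 by ring, show t - t/2 = t/2 by ring] at this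
  exact this

lemma splitSet {t : ℝ} (ht : 0 < t) : Ioo (0:ℝ) t = Ioo 0 (t/2) ∪ Ico (t/2) t := by
  ext x
  simp only [mem_Ioo, mem_union, mem_Ico]
  constructor
  · rintro ⟨h1, h2⟩
    rcases lt_or_ge x (t/2) with h | h
    · exact Or.inl ⟨h1, h⟩
    · exact Or.inr ⟨h, h2⟩
  · rintro (⟨h1, h2⟩ | ⟨h1, h2⟩) <;> constructor <;> linarith

lemma gIntOn1 {a b lam t : ℝ} (ha : -1 < a) (ha2 : a ≤ 0) (hb : -1 < b) (hlam : 0 ≤ lam)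
    (ht : 0 < t) :
    IntegrableOn (fun s => (t - s) ^ a * (Real.exp (lam * s) * s ^ b)) (Ioo 0 (t/2)) := by
  have ht2 : 0 < t / 2 := by linarith
  refine Integrable.mono' (g := fun s => ((t/2) ^ a * Real.exp (lam * t)) * s ^ b)
    ((rpowIntOn hb).const_mul _) (Measurable.aestronglyMeasurable (by fun_prop)) ?_
  rw [ae_restrict_iff' measurableSet_Ioo]
  refine ae_of_all _ fun s hs => ?_
  obtain ⟨h0, h2⟩ := hs
  have hts : 0 < t - s := by linarith
  rw [Real.norm_eq_abs, abs_of_nonneg (by positivity)]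
  have e1 : (t - s) ^ a ≤ (t/2) ^ a := Real.rpow_le_rpow_of_nonpos ht2 (by linarith) ha2
  have e2 : Real.exp (lam * s) ≤ Real.exp (lam * t) := Real.exp_le_exp.2 (by nlinarith)
  have e3 : Real.exp (lam * s) * s ^ b ≤ Real.exp (lam * t) * s ^ b :=
    mul_le_mul_of_nonneg_right e2 (Real.rpow_nonneg h0.le b)
  calc (t - s) ^ a * (Real.exp (lam * s) * s ^ b)
      ≤ (t/2) ^ a * (Real.exp (lam * t) * s ^ b) :=
        mul_le_mul e1 e3 (by positivity) (by positivity)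
    _ = ((t/2) ^ a * Real.exp (lam * t)) * s ^ b := by ring

lemma gIntOn2 {a b lam t : ℝ} (ha : -1 < a) (hb : -1 < b) (hlam : 0 ≤ lam) (ht : 0 < t) :
    IntegrableOn (fun s => (t - s) ^ a * (Real.exp (lam * s) * s ^ b)) (Ico (t/2) t) := by
  have ht2 : 0 < t / 2 := by linarith
  have base : IntegrableOn (fun s => (t - s) ^ a) (Ico (t/2) t) := by
    have h1 : IntervalIntegrable (fun u : ℝ => u ^ a) volume 0 (t/2) :=
      intervalIntegral.intervalIntegrable_rpow' ha
    have h2 := (h1.comp_sub_left t).symm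
    rw [sub_zero, show t - t/2 = t/2 by ring] at h2
    rw [intervalIntegrable_iff_integrableOn_Ioo_of_le (by linarith)] at h2
    rwa [integrableOn_Ico_iff_integrableOn_Ioo]
  refine Integrable.mono' (g := fun s => (Real.exp (lam * t) * ((t/2) ^ b + t ^ b)) * (t - s) ^ a)
    (base.const_mul _) (Measurable.aestronglyMeasurable (by fun_prop)) ?_
  rw [ae_restrict_iff' measurableSet_Ico]
  refine ae_of_all _ fun s hs => ?_
  obtain ⟨h1, h2⟩ := hs
  have h0 : 0 < s := lt_of_lt_of_le ht2 h1
  have hts : 0 ≤ t - s := by linarith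
  rw [Real.norm_eq_abs, abs_of_nonneg (by positivity)]
  have hsb : s ^ b ≤ (t/2) ^ b + t ^ b := by
    rcases le_or_gt 0 b with hbb | hbb
    · have e := Real.rpow_le_rpow h0.le h2.le hbb
      have e2 := Real.rpow_nonneg ht2.le b
      linarith
    · have e := Real.rpow_le_rpow_of_nonpos ht2 h1 hbb.le
      have e2 := Real.rpow_nonneg ht.le b
      linarith
  have e2 : Real.exp (lam * s) ≤ Real.exp (lam * t) := Real.exp_le_exp.2 (by nlinarith)
  have e3 : Real.exp (lam * s) * s ^ b ≤ Real.exp (lam * t) * ((t/2) ^ b + t ^ b) :=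
    mul_le_mul e2 hsb (Real.rpow_nonneg h0.le b) (Real.exp_pos _).le
  calc (t - s) ^ a * (Real.exp (lam * s) * s ^ b)
      ≤ (t - s) ^ a * (Real.exp (lam * t) * ((t/2) ^ b + t ^ b)) :=
        mul_le_mul_of_nonneg_left e3 (Real.rpow_nonneg hts a)
    _ = (Real.exp (lam * t) * ((t/2) ^ b + t ^ b)) * (t - s) ^ a := by ring

lemma gIntOn {a b lam t : ℝ} (ha : -1 < a) (ha2 : a ≤ 0) (hb : -1 < b) (hlam : 0 ≤ lam)
    (ht : 0 < t) :
    IntegrableOn (fun s => (t - s) ^ a * (Real.exp (lam * s) * s ^ b)) (Ioo 0 t) := by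
  rw [splitSet ht]
  exact (gIntOn1 ha ha2 hb hlam ht).union (gIntOn2 ha hb hlam ht)

lemma P1 {α β lam t : ℝ} (hα0 : 0 < α) (hα1 : α < 1) (hβ : -1 < β) (hlam : 0 ≤ lam)
    (ht : 0 < t) :
    ∫ s in Ioo 0 (t/2), (t - s) ^ (α-1) * (Real.exp (lam * s) * s ^ β)
      ≤ ((1/2:ℝ) ^ (α+β) / (β+1)) * (t ^ α * Real.exp (-lam * t / 2))
          * (Real.exp (lam * t) * t ^ β) := by
  have ht2 : 0 < t / 2 := by linarith
  have hb1 : (0:ℝ) < β + 1 := by linarith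
  have step1 : ∫ s in Ioo 0 (t/2), (t - s) ^ (α-1) * (Real.exp (lam * s) * s ^ β)
      ≤ ∫ s in Ioo 0 (t/2),
          ((t/2) ^ (α-1) * (Real.exp (lam * t) * Real.exp (-lam * t / 2))) * s ^ β := by
    refine setIntegral_mono_on (gIntOn1 (by linarith) (by linarith) hβ hlam ht)
      ((rpowIntOn hβ).const_mul _) measurableSet_Ioo fun s hs => ?_
    obtain ⟨h0, h2⟩ := hs
    have hts : 0 < t - s := by linarith
    have e1 : (t - s) ^ (α-1) ≤ (t/2) ^ (α-1) :=
      Real.rpow_le_rpow_of_nonpos ht2 (by linarith) (by linarith)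
    have e2 : Real.exp (lam * s) ≤ Real.exp (lam * t) * Real.exp (-lam * t / 2) := by
      rw [← Real.exp_add]
      refine Real.exp_le_exp.2 ?_
      nlinarith
    calc (t - s) ^ (α-1) * (Real.exp (lam * s) * s ^ β)
        ≤ (t/2) ^ (α-1) * ((Real.exp (lam * t) * Real.exp (-lam * t / 2)) * s ^ β) :=
          mul_le_mul e1 (mul_le_mul_of_nonneg_right e2 (Real.rpow_nonneg h0.le β))
            (by positivity) (by positivity)
      _ = ((t/2) ^ (α-1) * (Real.exp (lam * t) * Real.exp (-lam * t / 2))) * s ^ β := by ring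
  have step2 : ∫ s in Ioo 0 (t/2),
        ((t/2) ^ (α-1) * (Real.exp (lam * t) * Real.exp (-lam * t / 2))) * s ^ β
      = ((t/2) ^ (α-1) * (Real.exp (lam * t) * Real.exp (-lam * t / 2)))
          * ((t/2) ^ (β+1) / (β+1)) := by
    rw [MeasureTheory.integral_const_mul, rpowIntVal hβ ht2.le]
  have alg : ((t/2) ^ (α-1) * (Real.exp (lam * t) * Real.exp (-lam * t / 2)))
        * ((t/2) ^ (β+1) / (β+1))
      = ((1/2:ℝ) ^ (α+β) / (β+1)) * (t ^ α * Real.exp (-lam * t / 2))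
          * (Real.exp (lam * t) * t ^ β) := by
    have e1 : (t/2) ^ (α-1) * (t/2) ^ (β+1) = (t/2) ^ (α+β) := by
      rw [← Real.rpow_add ht2]; ring_nf
    have e2 : (t/2) ^ (α+β) = (1/2:ℝ) ^ (α+β) * t ^ (α+β) := by
      rw [show t/2 = (1/2:ℝ) * t by ring, Real.mul_rpow (by norm_num) ht.le]
    have e3 : t ^ (α+β) = t ^ α * t ^ β := Real.rpow_add ht α β
    calc ((t/2) ^ (α-1) * (Real.exp (lam * t) * Real.exp (-lam * t / 2)))
          * ((t/2) ^ (β+1) / (β+1))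
        = ((t/2) ^ (α-1) * (t/2) ^ (β+1))
            * (Real.exp (lam * t) * Real.exp (-lam * t / 2)) / (β+1) := by ring
      _ = ((1/2:ℝ) ^ (α+β) * (t ^ α * t ^ β))
            * (Real.exp (lam * t) * Real.exp (-lam * t / 2)) / (β+1) := by
          rw [e1, e2, e3]
      _ = _ := by ring
  linarith [step1, step2.le, alg.le]

lemma P2 {α β lam t : ℝ} (hα0 : 0 < α) (hα1 : α < 1) (hβ : -1 < β) (hlam : 0 ≤ lam)
    (ht : 0 < t) :
    ∫ s in Ico (t/2) t, (t - s) ^ (α-1) * (Real.exp (lam * s) * s ^ β)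
      ≤ (Real.exp (lam * t) * (((1/2:ℝ) ^ β + 1) * t ^ β))
          * ∫ u in Ioc 0 (t/2), u ^ (α-1) * Real.exp (-lam * u) := by
  have ht2 : 0 < t / 2 := by linarith
  have step1 : ∫ s in Ico (t/2) t, (t - s) ^ (α-1) * (Real.exp (lam * s) * s ^ β)
      ≤ ∫ s in Ico (t/2) t, (Real.exp (lam * t) * (((1/2:ℝ) ^ β + 1) * t ^ β))
          * ((t - s) ^ (α-1) * Real.exp (-lam * (t - s))) := by
    refine setIntegral_mono_on (gIntOn2 (by linarith) hβ hlam ht)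
      ((compKernIntOn (by linarith) hlam ht).const_mul _) measurableSet_Ico fun s hs => ?_
    obtain ⟨h1, h2⟩ := hs
    have h0 : 0 < s := lt_of_lt_of_le ht2 h1
    have hts : 0 ≤ t - s := by linarith
    have e1 : Real.exp (lam * s) = Real.exp (lam * t) * Real.exp (-lam * (t - s)) := by
      rw [← Real.exp_add]; ring_nf
    have hsb : s ^ β ≤ ((1/2:ℝ) ^ β + 1) * t ^ β := by
      have htb : (0:ℝ) ≤ t ^ β := Real.rpow_nonneg ht.le β
      rcases le_or_gt 0 β with hbb | hbb
      · have e := Real.rpow_le_rpow h0.le h2.le hbb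
        have e2 : (0:ℝ) ≤ (1/2:ℝ) ^ β := Real.rpow_nonneg (by norm_num) β
        nlinarith
      · have e : s ^ β ≤ (t/2) ^ β := Real.rpow_le_rpow_of_nonpos ht2 h1 hbb.le
        have e2 : (t/2) ^ β = (1/2:ℝ) ^ β * t ^ β := by
          rw [show t/2 = (1/2:ℝ) * t by ring, Real.mul_rpow (by norm_num) ht.le]
        nlinarith
    calc (t - s) ^ (α-1) * (Real.exp (lam * s) * s ^ β)
        = ((t - s) ^ (α-1) * Real.exp (-lam * (t - s))) * (Real.exp (lam * t) * s ^ β) := by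
          rw [e1]; ring
      _ ≤ ((t - s) ^ (α-1) * Real.exp (-lam * (t - s)))
            * (Real.exp (lam * t) * (((1/2:ℝ) ^ β + 1) * t ^ β)) := by
          refine mul_le_mul_of_nonneg_left ?_ (by positivity)
          exact mul_le_mul_of_nonneg_left hsb (Real.exp_pos _).le
      _ = _ := by ring
  have step2 : ∫ s in Ico (t/2) t, (Real.exp (lam * t) * (((1/2:ℝ) ^ β + 1) * t ^ β))
          * ((t - s) ^ (α-1) * Real.exp (-lam * (t - s)))
      = (Real.exp (lam * t) * (((1/2:ℝ) ^ β + 1) * t ^ β))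
          * ∫ u in Ioc 0 (t/2), u ^ (α-1) * Real.exp (-lam * u) := by
    rw [MeasureTheory.integral_const_mul, compKernVal ht]
  linarith [step1, step2.le]

lemma splitSet' {c d : ℝ} (h0 : 0 < d) (hd : d ≤ c) :
    Ioo (0:ℝ) c = Ioo 0 d ∪ Ico d c := by
  ext x
  simp only [mem_Ioo, mem_union, mem_Ico]
  constructor
  · rintro ⟨h1, h2⟩
    rcases lt_or_ge x d with h | h
    · exact Or.inl ⟨h1, h⟩
    · exact Or.inr ⟨h, h2⟩
  · rintro (⟨h1, h2⟩ | ⟨h1, h2⟩) <;> constructor <;> linarith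

lemma P3 {α lam δ T : ℝ} (hα0 : 0 < α) (hα1 : α < 1) (hlam : 0 ≤ lam) (hδ0 : 0 < δ)
    (hδT : δ < T) :
    ∫ u in Ioo 0 T, u ^ (α-1) * Real.exp (-lam * u)
      ≤ δ ^ α / α + Real.exp (-lam * δ) * (T ^ α / α) := by
  have hT : 0 < T := by linarith
  have hsub : Ico δ T ⊆ Ioo (0:ℝ) T := fun x hx => ⟨by linarith [hx.1], hx.2⟩
  have hint1 : IntegrableOn (fun u : ℝ => u ^ (α-1) * Real.exp (-lam * u)) (Ioo 0 δ) :=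
    expKernIntOn (by linarith) hlam
  have hint2 : IntegrableOn (fun u : ℝ => u ^ (α-1) * Real.exp (-lam * u)) (Ico δ T) :=
    (expKernIntOn (r := α-1) (by linarith) hlam (c := T)).mono_set hsub
  have hsplit : ∫ u in Ioo 0 T, u ^ (α-1) * Real.exp (-lam * u)
      = (∫ u in Ioo 0 δ, u ^ (α-1) * Real.exp (-lam * u))
        + ∫ u in Ico δ T, u ^ (α-1) * Real.exp (-lam * u) := by
    rw [splitSet' hδ0 hδT.le]
    refine setIntegral_union ?_ measurableSet_Ico hint1 hint2
    refine Set.disjoint_left.2 fun x hx hx' => ?_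
    exact absurd hx.2 (not_lt.2 hx'.1)
  have b1 : ∫ u in Ioo 0 δ, u ^ (α-1) * Real.exp (-lam * u) ≤ δ ^ α / α := by
    have : ∫ u in Ioo 0 δ, u ^ (α-1) * Real.exp (-lam * u)
        ≤ ∫ u in Ioo 0 δ, u ^ (α-1) := by
      refine setIntegral_mono_on hint1 (rpowIntOn (by linarith)) measurableSet_Ioo
        fun u hu => ?_
      exact mul_le_of_le_one_right (Real.rpow_nonneg hu.1.le _)
        (Real.exp_le_one_iff.2 (by nlinarith [hu.1]))
    rw [rpowIntVal (by linarith) hδ0.le] at this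
    rw [show α - 1 + 1 = α by ring] at this
    exact this
  have b2 : ∫ u in Ico δ T, u ^ (α-1) * Real.exp (-lam * u)
      ≤ Real.exp (-lam * δ) * (T ^ α / α) := by
    have s1 : ∫ u in Ico δ T, u ^ (α-1) * Real.exp (-lam * u)
        ≤ ∫ u in Ico δ T, Real.exp (-lam * δ) * u ^ (α-1) := by
      refine setIntegral_mono_on hint2
        (((rpowIntOn (r := α-1) (by linarith) (c := T)).mono_set hsub).const_mul _)
        measurableSet_Ico fun u hu => ?_
      have hu0 : 0 < u := by linarith [hu.1]
      have : Real.exp (-lam * u) ≤ Real.exp (-lam * δ) := by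
        refine Real.exp_le_exp.2 ?_
        nlinarith [hu.1]
      calc u ^ (α-1) * Real.exp (-lam * u) ≤ u ^ (α-1) * Real.exp (-lam * δ) :=
            mul_le_mul_of_nonneg_left this (Real.rpow_nonneg hu0.le _)
        _ = Real.exp (-lam * δ) * u ^ (α-1) := by ring
    have s2 : ∫ u in Ico δ T, Real.exp (-lam * δ) * u ^ (α-1)
        ≤ Real.exp (-lam * δ) * (T ^ α / α) := by
      rw [MeasureTheory.integral_const_mul]
      refine mul_le_mul_of_nonneg_left ?_ (Real.exp_pos _).le
      have s3 : ∫ u in Ico δ T, u ^ (α-1) ≤ ∫ u in Ioo 0 T, u ^ (α-1) := by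
        refine setIntegral_mono_set (rpowIntOn (by linarith)) ?_
          (HasSubset.Subset.eventuallyLE hsub)
        filter_upwards [self_mem_ae_restrict measurableSet_Ioo] with u hu
        exact Real.rpow_nonneg hu.1.le _
      rw [rpowIntVal (by linarith) hT.le, show α - 1 + 1 = α by ring] at s3
      exact s3
    linarith
  linarith

lemma Jbound {α β lam δ T t : ℝ} (hα0 : 0 < α) (hα1 : α < 1) (hβ : -1 < β) (hlam : 0 ≤ lam)
    (hδ0 : 0 < δ) (hδT : δ < T) (ht0 : 0 < t) (htT : t ≤ T) :
    ∫ s in Ioo 0 t, (t - s) ^ (α-1) * (Real.exp (lam * s) * s ^ β)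
      ≤ (((1/2:ℝ) ^ (α+β) / (β+1)) + ((1/2:ℝ) ^ β + 1) / α)
          * (δ ^ α + T ^ α * Real.exp (-lam * δ / 2)) * (Real.exp (lam * t) * t ^ β) := by
  have ht2 : 0 < t / 2 := by linarith
  have hb1 : (0:ℝ) < β + 1 := by linarith
  have hE : (0:ℝ) ≤ Real.exp (lam * t) * t ^ β := by positivity
  have hT0 : (0:ℝ) < T := by linarith
  have hc1 : (0:ℝ) ≤ (1/2:ℝ) ^ (α+β) / (β+1) :=
    div_nonneg (Real.rpow_nonneg (by norm_num) _) hb1.le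
  have hX : (0:ℝ) ≤ δ ^ α + T ^ α * Real.exp (-lam * δ / 2) :=
    add_nonneg (Real.rpow_nonneg hδ0.le _)
      (mul_nonneg (Real.rpow_nonneg hT0.le _) (Real.exp_pos _).le)
  have hsplit : ∫ s in Ioo 0 t, (t - s) ^ (α-1) * (Real.exp (lam * s) * s ^ β)
      = (∫ s in Ioo 0 (t/2), (t - s) ^ (α-1) * (Real.exp (lam * s) * s ^ β))
        + ∫ s in Ico (t/2) t, (t - s) ^ (α-1) * (Real.exp (lam * s) * s ^ β) := by
    rw [splitSet' ht2 (by linarith)]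
    refine setIntegral_union ?_ measurableSet_Ico
      (gIntOn1 (by linarith) (by linarith) hβ hlam ht0)
      (gIntOn2 (by linarith) hβ hlam ht0)
    refine Set.disjoint_left.2 fun x hx hx' => ?_
    exact absurd hx.2 (not_lt.2 hx'.1)
  have q1 : t ^ α * Real.exp (-lam * t / 2) ≤ δ ^ α + T ^ α * Real.exp (-lam * δ / 2) := by
    rcases le_or_gt t δ with h | h
    · have e1 : t ^ α ≤ δ ^ α := Real.rpow_le_rpow ht0.le h hα0.le
      have e2 : Real.exp (-lam * t / 2) ≤ 1 := Real.exp_le_one_iff.2 (by nlinarith)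
      have e3 : (0:ℝ) ≤ T ^ α * Real.exp (-lam * δ / 2) :=
        mul_nonneg (Real.rpow_nonneg hT0.le _) (Real.exp_pos _).le
      nlinarith [Real.rpow_nonneg ht0.le α]
    · have e1 : t ^ α ≤ T ^ α := Real.rpow_le_rpow ht0.le htT hα0.le
      have e2 : Real.exp (-lam * t / 2) ≤ Real.exp (-lam * δ / 2) :=
        Real.exp_le_exp.2 (by nlinarith)
      have e4 : (0:ℝ) ≤ δ ^ α := Real.rpow_nonneg hδ0.le α
      nlinarith [Real.rpow_nonneg ht0.le α, (Real.exp_pos (-lam * t / 2)).le]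
  have p1' : ∫ s in Ioo 0 (t/2), (t - s) ^ (α-1) * (Real.exp (lam * s) * s ^ β)
      ≤ ((1/2:ℝ) ^ (α+β) / (β+1)) * (δ ^ α + T ^ α * Real.exp (-lam * δ / 2))
          * (Real.exp (lam * t) * t ^ β) := by
    refine le_trans (P1 hα0 hα1 hβ hlam ht0) ?_
    exact mul_le_mul_of_nonneg_right (mul_le_mul_of_nonneg_left q1 hc1) hE
  have hI : ∫ u in Ioc 0 (t/2), u ^ (α-1) * Real.exp (-lam * u)
      ≤ (δ ^ α + T ^ α * Real.exp (-lam * δ / 2)) / α := by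
    have hsub : Ioc (0:ℝ) (t/2) ⊆ Ioo 0 T := fun x hx =>
      ⟨hx.1, lt_of_le_of_lt hx.2 (by linarith)⟩
    have m1 : ∫ u in Ioc 0 (t/2), u ^ (α-1) * Real.exp (-lam * u)
        ≤ ∫ u in Ioo 0 T, u ^ (α-1) * Real.exp (-lam * u) := by
      refine setIntegral_mono_set (expKernIntOn (by linarith) hlam) ?_
        (HasSubset.Subset.eventuallyLE hsub)
      filter_upwards [self_mem_ae_restrict measurableSet_Ioo] with u hu
      exact mul_nonneg (Real.rpow_nonneg hu.1.le _) (Real.exp_pos _).le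
    have m2 := P3 hα0 hα1 hlam hδ0 hδT (lam := lam)
    have he : Real.exp (-lam * δ) ≤ Real.exp (-lam * δ / 2) :=
      Real.exp_le_exp.2 (by nlinarith)
    have m3 : Real.exp (-lam * δ) * (T ^ α / α) ≤ Real.exp (-lam * δ / 2) * (T ^ α / α) :=
      mul_le_mul_of_nonneg_right he (div_nonneg (Real.rpow_nonneg hT0.le _) hα0.le)
    have : ∫ u in Ioc 0 (t/2), u ^ (α-1) * Real.exp (-lam * u)
        ≤ δ ^ α / α + Real.exp (-lam * δ / 2) * (T ^ α / α) := by linarith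
    refine le_trans this (le_of_eq ?_)
    field_simp
  have p2' : ∫ s in Ico (t/2) t, (t - s) ^ (α-1) * (Real.exp (lam * s) * s ^ β)
      ≤ (((1/2:ℝ) ^ β + 1) / α) * (δ ^ α + T ^ α * Real.exp (-lam * δ / 2))
          * (Real.exp (lam * t) * t ^ β) := by
    refine le_trans (P2 hα0 hα1 hβ hlam ht0) ?_
    have := mul_le_mul_of_nonneg_left hI
      (by positivity : (0:ℝ) ≤ Real.exp (lam * t) * (((1/2:ℝ) ^ β + 1) * t ^ β))
    refine le_trans this (le_of_eq ?_)
    field_simp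
  have hring : (((1/2:ℝ) ^ (α+β) / (β+1)) + ((1/2:ℝ) ^ β + 1) / α)
        * (δ ^ α + T ^ α * Real.exp (-lam * δ / 2)) * (Real.exp (lam * t) * t ^ β)
      = ((1/2:ℝ) ^ (α+β) / (β+1)) * (δ ^ α + T ^ α * Real.exp (-lam * δ / 2))
          * (Real.exp (lam * t) * t ^ β)
        + (((1/2:ℝ) ^ β + 1) / α) * (δ ^ α + T ^ α * Real.exp (-lam * δ / 2))
          * (Real.exp (lam * t) * t ^ β) := by ring
  linarith

set_option maxHeartbeats 1000000 in
theorem stmt_8 (α β B T : ℝ) (hα : α ∈ Set.Ioo (0:ℝ) 1) (hβ : -1 < β) (hB : 0 ≤ B)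
    (hT : 0 < T) :
    ∃ C > (0:ℝ), ∀ (A : ℝ), 0 ≤ A → ∀ (φ : ℝ → ℝ),
      ContinuousOn φ (Set.Ioc 0 T) →
      (∀ t ∈ Set.Ioc (0:ℝ) T, 0 ≤ φ t) →
      (∃ M : ℝ, ∀ t ∈ Set.Ioc (0:ℝ) T, t ^ (-β) * φ t ≤ M) →
      (∀ t ∈ Set.Ioc (0:ℝ) T,
        MeasureTheory.IntegrableOn (fun s => (t - s) ^ (α - 1) * φ s) (Set.Ioo 0 t)) →
      (∀ t ∈ Set.Ioc (0:ℝ) T,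
        φ t ≤ A * t ^ β + B * ∫ s in Set.Ioo (0:ℝ) t, (t - s) ^ (α - 1) * φ s) →
      ∀ t ∈ Set.Ioc (0:ℝ) T, φ t ≤ C * A * t ^ β := by
  obtain ⟨hα0, hα1⟩ := hα
  have hb1 : (0:ℝ) < β + 1 := by linarith
  obtain ⟨c₃, hc₃def⟩ : ∃ c : ℝ, c = ((1/2:ℝ) ^ (α+β) / (β+1)) + ((1/2:ℝ) ^ β + 1) / α :=
    ⟨_, rfl⟩
  have hc₃ : 0 < c₃ := by
    rw [hc₃def]
    have h1 : (0:ℝ) ≤ (1/2:ℝ) ^ (α+β) / (β+1) :=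
      div_nonneg (Real.rpow_nonneg (by norm_num) _) hb1.le
    have h2 : (0:ℝ) < ((1/2:ℝ) ^ β + 1) / α := by
      have := Real.rpow_nonneg (show (0:ℝ) ≤ 1/2 by norm_num) β
      positivity
    linarith
  obtain ⟨D, hDdef⟩ : ∃ d : ℝ, d = 4*B*c₃ + 1 := ⟨_, rfl⟩
  have hD0 : 0 < D := by rw [hDdef]; nlinarith
  obtain ⟨δ, hδdef⟩ : ∃ d : ℝ, d = min (T/2) ((1/D) ^ (1/α)) := ⟨_, rfl⟩
  have hδ0 : 0 < δ := by
    rw [hδdef]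
    exact lt_min (by linarith) (Real.rpow_pos_of_pos (by positivity) _)
  have hδT : δ < T := by
    rw [hδdef]; exact lt_of_le_of_lt (min_le_left _ _) (by linarith)
  have hδα : B * c₃ * δ ^ α ≤ 1/4 := by
    have h1 : δ ^ α ≤ ((1/D) ^ (1/α)) ^ α := by
      rw [hδdef]
      exact Real.rpow_le_rpow (by rw [← hδdef]; exact hδ0.le) (min_le_right _ _) hα0.le
    have h2 : ((1/D) ^ (1/α)) ^ α = 1/D := by
      rw [one_div α, Real.rpow_inv_rpow (by positivity) hα0.ne']
    have h3 : δ ^ α ≤ 1/D := h1.trans_eq h2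
    have h4 : B * c₃ * (1/D) ≤ 1/4 := by
      rw [mul_one_div, div_le_div_iff₀ hD0 (by norm_num)]
      rw [hDdef]; nlinarith
    have h5 : B * c₃ * δ ^ α ≤ B * c₃ * (1/D) :=
      mul_le_mul_of_nonneg_left h3 (mul_nonneg hB hc₃.le)
    linarith
  obtain ⟨L, hLdef⟩ : ∃ l : ℝ, l = 4*B*c₃*T^α := ⟨_, rfl⟩
  have hL0 : 0 ≤ L := by
    rw [hLdef]
    have h := Real.rpow_nonneg hT.le α
    exact mul_nonneg (mul_nonneg (by linarith) hc₃.le) h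
  obtain ⟨lam, hlamdef⟩ : ∃ l : ℝ, l = 2*L/δ := ⟨_, rfl⟩
  have hlam : 0 ≤ lam := by rw [hlamdef]; positivity
  have hexpB : B * c₃ * (T ^ α * Real.exp (-lam * δ / 2)) ≤ 1/4 := by
    have harg : -lam * δ / 2 = -L := by
      rw [hlamdef]; field_simp
    rw [harg]
    have h1 : L ≤ Real.exp L := by linarith [Real.add_one_le_exp L]
    have h2 : Real.exp (-L) = (Real.exp L)⁻¹ := Real.exp_neg L
    have h3 : B * c₃ * T ^ α = L / 4 := by rw [hLdef]; ring
    have h4 := Real.exp_pos L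
    have h5 : (0:ℝ) < (Real.exp L)⁻¹ := by positivity
    rw [← mul_assoc, h3, h2]
    nlinarith [mul_nonneg (sub_nonneg.2 h1) h5.le, mul_inv_cancel₀ h4.ne']
  refine ⟨2 * Real.exp (lam * T) + 1, by positivity, ?_⟩
  intro A hA φ hcont hφpos hMex hint hineq
  obtain ⟨M, hM⟩ := hMex
  have hTmem : (T:ℝ) ∈ Ioc (0:ℝ) T := ⟨hT, le_refl T⟩
  have hSne : ((fun u => Real.exp (-lam * u) * (u ^ (-β) * φ u)) '' (Ioc 0 T)).Nonempty :=
    ⟨_, T, hTmem, rfl⟩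
  have hSbdd : BddAbove ((fun u => Real.exp (-lam * u) * (u ^ (-β) * φ u)) '' (Ioc 0 T)) := by
    refine ⟨max M 0, ?_⟩
    rintro x ⟨u, hu, rfl⟩
    have hfu : u ^ (-β) * φ u ≤ M := hM u hu
    have hfu0 : 0 ≤ u ^ (-β) * φ u :=
      mul_nonneg (Real.rpow_nonneg hu.1.le _) (hφpos u hu)
    have he1 : Real.exp (-lam * u) ≤ 1 := Real.exp_le_one_iff.2 (by nlinarith [hu.1])
    calc Real.exp (-lam * u) * (u ^ (-β) * φ u) ≤ u ^ (-β) * φ u :=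
          mul_le_of_le_one_left hfu0 he1
      _ ≤ M := hfu
      _ ≤ max M 0 := le_max_left _ _
  obtain ⟨m, hmdef⟩ : ∃ m : ℝ,
      m = sSup ((fun u => Real.exp (-lam * u) * (u ^ (-β) * φ u)) '' (Ioc 0 T)) := ⟨_, rfl⟩
  have hmub : ∀ u ∈ Ioc (0:ℝ) T, Real.exp (-lam * u) * (u ^ (-β) * φ u) ≤ m := by
    intro u hu
    rw [hmdef]
    exact le_csSup hSbdd ⟨u, hu, rfl⟩
  have hm0 : 0 ≤ m := by
    refine le_trans ?_ (hmub T hTmem)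
    exact mul_nonneg (Real.exp_pos _).le
      (mul_nonneg (Real.rpow_nonneg hT.le _) (hφpos T hTmem))
  have key : ∀ u ∈ Ioc (0:ℝ) T, φ u ≤ m * (Real.exp (lam * u) * u ^ β) := by
    intro u hu
    have h := hmub u hu
    have e1 : Real.exp (-lam * u) * Real.exp (lam * u) = 1 := by
      rw [← Real.exp_add]; simp
    have e2 : u ^ (-β) * u ^ β = 1 := by
      rw [Real.rpow_neg hu.1.le]
      field_simp [(Real.rpow_pos_of_pos hu.1 β).ne']
    have hEu : (0:ℝ) ≤ Real.exp (lam * u) * u ^ β :=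
      mul_nonneg (Real.exp_pos _).le (Real.rpow_nonneg hu.1.le _)
    have h2 := mul_le_mul_of_nonneg_left h hEu
    calc φ u = (Real.exp (lam * u) * u ^ β)
          * (Real.exp (-lam * u) * (u ^ (-β) * φ u)) := by
          rw [show (Real.exp (lam * u) * u ^ β) * (Real.exp (-lam * u) * (u ^ (-β) * φ u))
            = (Real.exp (-lam * u) * Real.exp (lam * u)) * ((u ^ (-β) * u ^ β) * φ u) by ring,
            e1, e2]; ring
      _ ≤ (Real.exp (lam * u) * u ^ β) * m := h2
      _ = m * (Real.exp (lam * u) * u ^ β) := by ring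
  have main : ∀ t ∈ Ioc (0:ℝ) T,
      φ t ≤ A * t ^ β + (1/2) * (m * (Real.exp (lam * t) * t ^ β)) := by
    intro t ht
    have ht0 := ht.1
    have h1 := hineq t ht
    have hcomp : ∫ s in Ioo (0:ℝ) t, (t - s) ^ (α-1) * φ s
        ≤ m * ∫ s in Ioo (0:ℝ) t, (t - s) ^ (α-1) * (Real.exp (lam * s) * s ^ β) := by
      rw [← MeasureTheory.integral_const_mul]
      refine setIntegral_mono_on (hint t ht)
        (((gIntOn (by linarith) (by linarith) hβ hlam ht0)).const_mul m)
        measurableSet_Ioo fun s hs => ?_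
      have hsT : s ∈ Ioc (0:ℝ) T := ⟨hs.1, le_trans hs.2.le ht.2⟩
      have hk : (0:ℝ) ≤ (t - s) ^ (α-1) := Real.rpow_nonneg (by linarith [hs.2]) _
      calc (t - s) ^ (α-1) * φ s
          ≤ (t - s) ^ (α-1) * (m * (Real.exp (lam * s) * s ^ β)) :=
            mul_le_mul_of_nonneg_left (key s hsT) hk
        _ = m * ((t - s) ^ (α-1) * (Real.exp (lam * s) * s ^ β)) := by ring
    have hJ := Jbound hα0 hα1 hβ hlam hδ0 hδT ht.1 ht.2
    rw [← hc₃def] at hJ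
    have hE : (0:ℝ) ≤ Real.exp (lam * t) * t ^ β :=
      mul_nonneg (Real.exp_pos _).le (Real.rpow_nonneg ht0.le _)
    have hBη : B * (c₃ * (δ ^ α + T ^ α * Real.exp (-lam * δ / 2))) ≤ 1/2 := by
      nlinarith [hδα, hexpB]
    have step : B * ∫ s in Ioo (0:ℝ) t, (t - s) ^ (α-1) * φ s
        ≤ (1/2) * (m * (Real.exp (lam * t) * t ^ β)) := by
      have s2 : m * ∫ s in Ioo (0:ℝ) t, (t - s) ^ (α-1) * (Real.exp (lam * s) * s ^ β)
          ≤ m * (c₃ * (δ ^ α + T ^ α * Real.exp (-lam * δ / 2))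
              * (Real.exp (lam * t) * t ^ β)) :=
        mul_le_mul_of_nonneg_left hJ hm0
      have s3 : B * (m * (c₃ * (δ ^ α + T ^ α * Real.exp (-lam * δ / 2))
            * (Real.exp (lam * t) * t ^ β)))
          ≤ (1/2) * (m * (Real.exp (lam * t) * t ^ β)) := by
        have hmE : (0:ℝ) ≤ m * (Real.exp (lam * t) * t ^ β) := mul_nonneg hm0 hE
        have h := mul_le_mul_of_nonneg_right hBη hmE
        calc B * (m * (c₃ * (δ ^ α + T ^ α * Real.exp (-lam * δ / 2))
              * (Real.exp (lam * t) * t ^ β)))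
            = (B * (c₃ * (δ ^ α + T ^ α * Real.exp (-lam * δ / 2))))
                * (m * (Real.exp (lam * t) * t ^ β)) := by ring
          _ ≤ (1/2) * (m * (Real.exp (lam * t) * t ^ β)) := h
      have s1 := mul_le_mul_of_nonneg_left (le_trans hcomp s2) hB
      exact le_trans s1 s3
    exact le_trans h1 (add_le_add le_rfl step)
  have hmle : m ≤ A + m/2 := by
    rw [hmdef]
    refine csSup_le hSne ?_
    rintro x ⟨t, ht, rfl⟩
    have h2 := main t ht
    have hw : (0:ℝ) ≤ Real.exp (-lam * t) * t ^ (-β) :=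
      mul_nonneg (Real.exp_pos _).le (Real.rpow_nonneg ht.1.le _)
    have e1 : Real.exp (-lam * t) * Real.exp (lam * t) = 1 := by
      rw [← Real.exp_add]; simp
    have e2 : t ^ (-β) * t ^ β = 1 := by
      rw [Real.rpow_neg ht.1.le]
      field_simp [(Real.rpow_pos_of_pos ht.1 β).ne']
    have h3 := mul_le_mul_of_nonneg_left h2 hw
    have lhs_eq : (Real.exp (-lam * t) * t ^ (-β)) * φ t
        = Real.exp (-lam * t) * (t ^ (-β) * φ t) := by ring
    have rhs_eq : (Real.exp (-lam * t) * t ^ (-β))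
          * (A * t ^ β + (1/2) * (m * (Real.exp (lam * t) * t ^ β)))
        = A * Real.exp (-lam * t) * (t ^ (-β) * t ^ β)
          + (m/2) * ((Real.exp (-lam * t) * Real.exp (lam * t)) * (t ^ (-β) * t ^ β)) := by
      ring
    rw [lhs_eq, rhs_eq, e1, e2] at h3
    have he1 : Real.exp (-lam * t) ≤ 1 := Real.exp_le_one_iff.2 (by nlinarith [ht.1])
    have hAe : A * Real.exp (-lam * t) ≤ A := mul_le_of_le_one_right hA he1
    simp only [mul_one] at h3
    linarith
  have hm2A : m ≤ 2*A := by linarith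
  intro t ht
  have hk := key t ht
  have hexp2 : Real.exp (lam * t) ≤ Real.exp (lam * T) :=
    Real.exp_le_exp.2 (mul_le_mul_of_nonneg_left ht.2 hlam)
  have htβ : (0:ℝ) ≤ t ^ β := Real.rpow_nonneg ht.1.le β
  have hEE : (0:ℝ) ≤ Real.exp (lam * t) * t ^ β :=
    mul_nonneg (Real.exp_pos _).le htβ
  calc φ t ≤ m * (Real.exp (lam * t) * t ^ β) := hk
    _ ≤ (2*A) * (Real.exp (lam * T) * t ^ β) :=
        mul_le_mul hm2A (mul_le_mul_of_nonneg_right hexp2 htβ) hEE (by linarith)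
    _ ≤ (2 * Real.exp (lam * T) + 1) * A * t ^ β := by
        nlinarith [mul_nonneg hA htβ]
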